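/- Let d be odd, Δ ≥ 2, and let A ∈ ℤ^{15d × (6+15d)}_{≥0} be the block matrix whose first 6 columns are (M; 0; …; 0) with M the edge-matching incidence matrix of the Petersen graph, and whose remaining columns form d blocks of 15, where block j (for j = 1,…,d) contributes the identity I₁₅ in block-row j and Δ·I₁₅ in block-row j+1 (no entries below for j = d). Then the integer points in the convex hull of the 6+15d columns of A are exactly the columns themselves. -/

import Mathlib

/-- The Petersen graph, presented as the Kneser graph `K(5,2)`: vertices are the
2-element subsets of `Fin 5`, adjacent iff disjoint. -/
def Petersen : SimpleGraph {s : Finset (Fin 5) // s.card = 2} where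
  Adj a b := Disjoint a.1 b.1
  symm := ⟨fun a b h => h.symm⟩
  loopless := ⟨fun a h => by
    have h := Finset.disjoint_self_iff_empty _ |>.mp h
    have h2 := a.2
    rw [h] at h2
    simp at h2⟩

open scoped Classical

/-- The `15d × (6+15d)` block matrix of the Petersen-graph construction: the
first 6 columns are `(M; 0; …; 0)` with `M` the edge/matching incidence matrix
of the Petersen graph; the remaining `d` blocks of 15 columns contribute `I₁₅`
in block-row `j` and `Δ·I₁₅` in block-row `j+1`. -/
noncomputable def blockMatR (d : ℕ) (Δ : ℤ) (eE : Fin 15 ≃ Petersen.edgeSet)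
    (eM : Fin 6 ≃ {M : Petersen.Subgraph // M.IsPerfectMatching}) :
    Matrix (Fin (15 * d)) (Fin (6 + 15 * d)) ℝ :=
  fun r c =>
    if hc : (c : ℕ) < 6 then
      (if hr : (r : ℕ) < 15 then
        (if (eE ⟨(r : ℕ), hr⟩ : Sym2 _) ∈ (eM ⟨(c : ℕ), hc⟩).1.edgeSet then 1 else 0)
      else 0)
    else if (r : ℕ) + 6 = (c : ℕ) then 1
    else if (r : ℕ) + 6 = (c : ℕ) + 15 then (Δ : ℝ) else 0

/-- The right-hand side whose block-row `j` equals `Δ^(j-1) · (1,…,1) ∈ ℝ^15`. -/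
def blockRhs (d : ℕ) (Δ : ℤ) : Fin (15 * d) → ℝ := fun r => (Δ : ℝ) ^ ((r : ℕ) / 15)


open scoped Classical

lemma pm_eq_of_edgeSet_subset {V : Type*} {G : SimpleGraph V} {a b : G.Subgraph}
    (ha : a.IsPerfectMatching) (hb : b.IsPerfectMatching) (h : a.edgeSet ⊆ b.edgeSet) :
    a = b := by
  ext x y
  · simp [ha.2 _, hb.2 _]
  · constructor
    · intro hxy
      have : s(x, y) ∈ a.edgeSet := by rwa [SimpleGraph.Subgraph.mem_edgeSet]
      exact (SimpleGraph.Subgraph.mem_edgeSet).mp (h this)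
    · intro hxy
      obtain ⟨z, hz, huniq⟩ := ha.1 (ha.2 x)
      have hbz : b.Adj x z := (SimpleGraph.Subgraph.mem_edgeSet).mp
        (h ((SimpleGraph.Subgraph.mem_edgeSet).mpr hz))
      obtain ⟨z', hz', huniq'⟩ := hb.1 (hb.2 x)
      have h1 : z = z' := huniq' _ hbz
      have h2 : y = z' := huniq' _ hxy
      rw [h1.trans h2.symm] at hz
      exact hz

lemma pm_exists_edge_not_mem {V : Type*} {G : SimpleGraph V} {a b : G.Subgraph}
    (ha : a.IsPerfectMatching) (hb : b.IsPerfectMatching) (hab : a ≠ b) :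
    ∃ e, e ∈ a.edgeSet ∧ e ∉ b.edgeSet := by
  by_contra hcon
  push_neg at hcon
  exact hab (pm_eq_of_edgeSet_subset ha hb hcon)

lemma pm_two_edges {a : Petersen.Subgraph} (ha : a.IsPerfectMatching) :
    ∃ e₁ e₂, e₁ ∈ a.edgeSet ∧ e₂ ∈ a.edgeSet ∧ e₁ ≠ e₂ := by
  have h01 : ({0, 1} : Finset (Fin 5)).card = 2 := by decide
  have h23 : ({2, 3} : Finset (Fin 5)).card = 2 := by decide
  have h24 : ({2, 4} : Finset (Fin 5)).card = 2 := by decide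
  set x : {s : Finset (Fin 5) // s.card = 2} := ⟨{0, 1}, h01⟩ with hx
  set v2 : {s : Finset (Fin 5) // s.card = 2} := ⟨{2, 3}, h23⟩ with hv2
  set v3 : {s : Finset (Fin 5) // s.card = 2} := ⟨{2, 4}, h24⟩ with hv3
  obtain ⟨y, hy, -⟩ := ha.1 (ha.2 x)
  set z : {s : Finset (Fin 5) // s.card = 2} := if y = v2 then v3 else v2 with hz
  have d1 : ({2, 4} : Finset (Fin 5)) ≠ {0, 1} := by decide
  have d2 : ({2, 3} : Finset (Fin 5)) ≠ {0, 1} := by decide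
  have d3 : ({2, 4} : Finset (Fin 5)) ≠ {2, 3} := by decide
  have hzx : z ≠ x := by
    rw [hz]; split_ifs
    · exact fun h => d1 (congrArg Subtype.val h)
    · exact fun h => d2 (congrArg Subtype.val h)
  have hzy : z ≠ y := by
    rw [hz]; split_ifs with h
    · intro h'; rw [← h'] at h; exact d3 (congrArg Subtype.val h)
    · intro h'; exact h h'.symm
  obtain ⟨u, hu, -⟩ := ha.1 (ha.2 z)
  refine ⟨s(x, y), s(z, u), ?_, ?_, ?_⟩
  · rwa [SimpleGraph.Subgraph.mem_edgeSet]
  · rwa [SimpleGraph.Subgraph.mem_edgeSet]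
  · intro h
    rw [Sym2.eq_iff] at h
    rcases h with ⟨h1, h2⟩ | ⟨h1, h2⟩
    · exact hzx h1.symm
    · exact hzy h2.symm

lemma real_int_eq_one {x : ℝ} (h : ∃ n : ℤ, x = n) (h0 : 0 < x) (h1 : x ≤ 1) : x = 1 := by
  obtain ⟨n, rfl⟩ := h
  have hn0 : 0 < n := by exact_mod_cast h0
  have hn1 : n ≤ 1 := by exact_mod_cast h1
  have : n = 1 := by omega
  rw [this]; norm_num
theorem stmt11 (d : ℕ) (hd : Odd d) (Δ : ℤ) (hΔ : 2 ≤ Δ)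
    (eE : Fin 15 ≃ Petersen.edgeSet)
    (eM : Fin 6 ≃ {M : Petersen.Subgraph // M.IsPerfectMatching}) :
    {v : Fin (15 * d) → ℝ |
        v ∈ convexHull ℝ (Set.range fun c r => blockMatR d Δ eE eM r c) ∧
        ∀ r, ∃ n : ℤ, v r = (n : ℝ)} =
      Set.range (fun c r => blockMatR d Δ eE eM r c) := by
  have hd1 : 0 < d := hd.pos
  have h15 : 15 ≤ 15 * d := by omega
  have hΔ0 : (0:ℝ) ≤ (Δ:ℝ) := by exact_mod_cast (by omega : (0:ℤ) ≤ Δ)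
  set A := blockMatR d Δ eE eM with hAdef
  have hApos : ∀ r c, 0 ≤ A r c := by
    intro r c
    simp only [hAdef, blockMatR]
    split_ifs <;> first | exact hΔ0 | norm_num
  have hA01 : ∀ (r : Fin (15*d)), (r:ℕ) < 15 → ∀ c, A r c = 0 ∨ A r c = 1 := by
    intro r hr c
    simp only [hAdef, blockMatR]
    split_ifs <;> first | (left; rfl) | (right; rfl) | (exfalso; omega)
  have hAblock : ∀ (r : Fin (15*d)) (c : Fin (6+15*d)), ¬((c:ℕ) < 6) →
      A r c = (if (r:ℕ) + 6 = (c:ℕ) then 1 else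
        if (r:ℕ) + 6 = (c:ℕ) + 15 then (Δ:ℝ) else 0) := by
    intro r c hc
    simp only [hAdef, blockMatR]
    rw [dif_neg hc]
  apply Set.Subset.antisymm
  · rintro v ⟨hv, hint⟩
    rw [convexHull_range_eq_exists_affineCombination] at hv
    obtain ⟨s, w₀, hw₀, hw₁, hvc⟩ := hv
    set w : Fin (6+15*d) → ℝ := fun c => if c ∈ s then w₀ c else 0 with hwdef
    have hw0 : ∀ c, 0 ≤ w c := by
      intro c
      simp only [hwdef]
      split_ifs with h
      · exact hw₀ c h
      · exact le_refl 0
    have hwsum : ∑ c, w c = 1 := by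
      simp only [hwdef]
      rw [Finset.sum_ite_mem, Finset.univ_inter]
      exact hw₁
    have hvr : ∀ r, v r = ∑ c, w c * A r c := by
      intro r
      have h := hvc
      rw [Finset.affineCombination_eq_linear_combination s _ w₀ hw₁] at h
      have h1 : v r = ∑ c ∈ s, w₀ c * A r c := by
        rw [← h, Finset.sum_apply]
        simp only [Pi.smul_apply, smul_eq_mul]
      have h2 : ∑ c, w c * A r c = ∑ c ∈ Finset.univ ∩ s, w₀ c * A r c := by
        rw [← Finset.sum_ite_mem]
        apply Finset.sum_congr rfl
        intro c _
        simp only [hwdef]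
        rw [ite_mul, zero_mul]
      rw [h1, h2, Finset.univ_inter]
    have hsingle : ∀ (r) (c), w c * A r c ≤ v r := by
      intro r c
      rw [hvr r]
      exact Finset.single_le_sum (fun c' _ => mul_nonneg (hw0 c') (hApos r c'))
        (Finset.mem_univ c)
    have hwle1 : ∀ c, w c ≤ 1 := fun c =>
      hwsum ▸ Finset.single_le_sum (fun c' _ => hw0 c') (Finset.mem_univ c)
    have hvub : ∀ r : Fin (15*d), (r:ℕ) < 15 → v r ≤ 1 := by
      intro r hr
      rw [hvr r, ← hwsum]
      apply Finset.sum_le_sum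
      intro c _
      rcases hA01 r hr c with h | h
      · rw [h, mul_zero]; exact hw0 c
      · rw [h, mul_one]
    have hv01 : ∀ r : Fin (15*d), (r:ℕ) < 15 → 0 < v r → v r = 1 := fun r hr h0 =>
      real_int_eq_one (hint r) h0 (hvub r hr)
    have hkey : ∀ (r : Fin (15*d)), (r:ℕ) < 15 → v r = 1 → ∀ c, 0 < w c → A r c = 1 := by
      intro r hr hv1 c hc
      have hsum0 : ∑ c', w c' * (1 - A r c') = 0 := by
        have heq : ∑ c', w c' * (1 - A r c') = (∑ c', w c') - ∑ c', w c' * A r c' := by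
          rw [← Finset.sum_sub_distrib]
          exact Finset.sum_congr rfl (fun c' _ => by ring)
        rw [heq, hwsum, ← hvr r, hv1, sub_self]
      have hnn : ∀ c' ∈ Finset.univ, 0 ≤ w c' * (1 - A r c') := by
        intro c' _
        apply mul_nonneg (hw0 c')
        rcases hA01 r hr c' with h | h <;> rw [h] <;> norm_num
      have hz := (Finset.sum_eq_zero_iff_of_nonneg hnn).mp hsum0 c (Finset.mem_univ c)
      rcases mul_eq_zero.mp hz with h | h
      · exact absurd h (ne_of_gt hc)
      · linarith
    have rowlt : ∀ i : Fin 15, (i : ℕ) < 15*d := fun i => lt_of_lt_of_le i.isLt h15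
    set rE : Petersen.edgeSet → Fin (15*d) := fun e => ⟨(eE.symm e : ℕ), rowlt _⟩ with hrE
    have hrE15 : ∀ e, ((rE e : Fin (15*d)) : ℕ) < 15 := fun e => (eE.symm e).isLt
    have hrowE : ∀ (e : Petersen.edgeSet) (c : Fin (6+15*d)) (hc6 : (c:ℕ) < 6),
        A (rE e) c = if (e : Sym2 _) ∈ (eM ⟨(c:ℕ), hc6⟩).1.edgeSet then 1 else 0 := by
      intro e c hc6
      simp only [hAdef, blockMatR]
      rw [dif_pos hc6, dif_pos (hrE15 e)]
      have h1 : (⟨((rE e : Fin (15*d)) : ℕ), hrE15 e⟩ : Fin 15) = eE.symm e :=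
        Fin.ext rfl
      rw [h1, Equiv.apply_symm_apply]
    have hfin : ∀ c₀ : Fin (6+15*d), w c₀ = 1 →
        v ∈ Set.range (fun c r => A r c) := by
      intro c₀ h1
      have hrest : ∀ c, c ≠ c₀ → w c = 0 := by
        intro c hc
        have hadd := Finset.add_sum_erase Finset.univ w (Finset.mem_univ c₀)
        have hsum' : ∑ c' ∈ Finset.univ.erase c₀, w c' = 0 := by
          rw [hwsum] at hadd; linarith [hadd, h1]
        exact (Finset.sum_eq_zero_iff_of_nonneg (fun c' _ => hw0 c')).mp hsum' c
          (Finset.mem_erase.mpr ⟨hc, Finset.mem_univ c⟩)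
      refine ⟨c₀, funext fun r => ?_⟩
      show A r c₀ = v r
      have hsum : ∑ c, w c * A r c = w c₀ * A r c₀ :=
        Finset.sum_eq_single c₀ (fun c _ hc => by rw [hrest c hc, zero_mul])
          (fun h => absurd (Finset.mem_univ c₀) h)
      rw [hvr r, hsum, h1, one_mul]
    by_cases hcase : ∃ a : Fin (6+15*d), (a:ℕ) < 6 ∧ 0 < w a
    · obtain ⟨a, ha6, hwa⟩ := hcase
      set Ma := eM ⟨(a:ℕ), ha6⟩ with hMa
      have huniq : ∀ b : Fin (6+15*d), (b:ℕ) < 6 → 0 < w b → b = a := by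
        intro b hb6 hwb
        by_contra hba
        set Mb := eM ⟨(b:ℕ), hb6⟩ with hMb
        have hne : Ma.1 ≠ Mb.1 := by
          intro h
          apply hba
          have h2 : (⟨(b:ℕ), hb6⟩ : Fin 6) = ⟨(a:ℕ), ha6⟩ := eM.injective (Subtype.ext h.symm)
          have h3 := congrArg Fin.val h2
          exact Fin.ext h3
        obtain ⟨e, hea, heb⟩ := pm_exists_edge_not_mem Ma.2 Mb.2 hne
        set ee : Petersen.edgeSet := ⟨e, Ma.1.edgeSet_subset hea⟩ with heee
        have hA_a : A (rE ee) a = 1 := by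
          rw [hrowE ee a ha6, if_pos]; exact hea
        have hA_b : A (rE ee) b = 0 := by
          rw [hrowE ee b hb6, if_neg]; exact heb
        have hle := hsingle (rE ee) a
        rw [hA_a, mul_one] at hle
        have h0 : 0 < v (rE ee) := lt_of_lt_of_le hwa hle
        have h1 := hkey (rE ee) (hrE15 ee) (hv01 _ (hrE15 ee) h0) b hwb
        rw [hA_b] at h1
        norm_num at h1
      obtain ⟨e₁, e₂, he₁, he₂, hne12⟩ := pm_two_edges Ma.2
      set ee₁ : Petersen.edgeSet := ⟨e₁, Ma.1.edgeSet_subset he₁⟩ with hee₁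
      set ee₂ : Petersen.edgeSet := ⟨e₂, Ma.1.edgeSet_subset he₂⟩ with hee₂
      have hr12 : rE ee₁ ≠ rE ee₂ := by
        intro h
        apply hne12
        have h2' : ((rE ee₁ : Fin (15*d)) : ℕ) = ((rE ee₂ : Fin (15*d)) : ℕ) :=
          congrArg Fin.val h
        have h2 : eE.symm ee₁ = eE.symm ee₂ := Fin.ext h2'
        have h3 := eE.symm.injective h2
        exact congrArg Subtype.val h3
      have hA1a : A (rE ee₁) a = 1 := by
        rw [hrowE ee₁ a ha6, if_pos]; exact he₁
      have hA2a : A (rE ee₂) a = 1 := by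
        rw [hrowE ee₂ a ha6, if_pos]; exact he₂
      have hle1 := hsingle (rE ee₁) a
      rw [hA1a, mul_one] at hle1
      have hv1 : v (rE ee₁) = 1 := hv01 _ (hrE15 ee₁) (lt_of_lt_of_le hwa hle1)
      have hkey1 := hkey (rE ee₁) (hrE15 ee₁) hv1
      have hcalc : v (rE ee₂) = w a := by
        rw [hvr]
        have hsum : ∑ c, w c * A (rE ee₂) c = w a * A (rE ee₂) a := by
          apply Finset.sum_eq_single a
          · intro c _ hca
            by_cases hwc : 0 < w c
            · have hc6 : ¬ (c:ℕ) < 6 := fun h => hca (huniq c h hwc)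
              have h1 := hkey1 c hwc
              rw [hAblock _ c hc6] at h1
              rw [hAblock _ c hc6]
              by_cases h2 : ((rE ee₁ : Fin (15*d)) : ℕ) + 6 = (c:ℕ)
              · rw [if_neg, if_neg, mul_zero]
                · have := hrE15 ee₂; omega
                · intro hctr
                  exact hr12 (Fin.ext (by omega))
              · rw [if_neg h2] at h1
                by_cases h3 : ((rE ee₁ : Fin (15*d)) : ℕ) + 6 = (c:ℕ) + 15
                · exfalso; have := hrE15 ee₁; omega
                · rw [if_neg h3] at h1; norm_num at h1
            · rw [le_antisymm (not_lt.mp hwc) (hw0 c), zero_mul]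
          · intro h; exact absurd (Finset.mem_univ a) h
        rw [hsum, hA2a, mul_one]
      have hle2 := hsingle (rE ee₂) a
      rw [hA2a, mul_one] at hle2
      have hv2 : v (rE ee₂) = 1 := hv01 _ (hrE15 ee₂) (lt_of_lt_of_le hwa hle2)
      exact hfin a (hcalc.symm.trans hv2)
    · push_neg at hcase
      have hzero6 : ∀ c : Fin (6+15*d), (c:ℕ) < 6 → w c = 0 := fun c h =>
        le_antisymm (hcase c h) (hw0 c)
      have hSne : (Finset.univ.filter (fun c => 0 < w c)).Nonempty := by
        by_contra h
        rw [Finset.not_nonempty_iff_eq_empty] at h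
        have hzero : ∑ c, w c = 0 := by
          apply Finset.sum_eq_zero
          intro c _
          by_contra hc
          have hpos : 0 < w c := lt_of_le_of_ne (hw0 c) (Ne.symm hc)
          have hmem : c ∈ Finset.univ.filter (fun c => 0 < w c) :=
            Finset.mem_filter.mpr ⟨Finset.mem_univ c, hpos⟩
          rw [h] at hmem
          exact absurd hmem (Finset.notMem_empty c)
        rw [hwsum] at hzero
        norm_num at hzero
      set c₀ := (Finset.univ.filter (fun c => 0 < w c)).min' hSne with hc₀
      have hwc₀ : 0 < w c₀ := (Finset.mem_filter.mp (Finset.min'_mem _ hSne)).2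
      have hmin : ∀ c, 0 < w c → c₀ ≤ c := fun c hc =>
        Finset.min'_le _ c (Finset.mem_filter.mpr ⟨Finset.mem_univ c, hc⟩)
      have hc₀6 : ¬ ((c₀:ℕ) < 6) := fun h => by
        rw [hzero6 c₀ h] at hwc₀; exact lt_irrefl 0 hwc₀
      have hrlt : (c₀:ℕ) - 6 < 15*d := by have := c₀.isLt; omega
      set r : Fin (15*d) := ⟨(c₀:ℕ) - 6, hrlt⟩ with hrdef
      have hr6 : (r:ℕ) + 6 = (c₀:ℕ) := by
        simp only [hrdef]; omega
      have hcalc : v r = w c₀ := by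
        rw [hvr]
        have hsum : ∑ c, w c * A r c = w c₀ * A r c₀ := by
          apply Finset.sum_eq_single c₀
          · intro c _ hcc
            by_cases hwc : 0 < w c
            · have hc6 : ¬ (c:ℕ) < 6 := fun h => by
                rw [hzero6 c h] at hwc; exact lt_irrefl 0 hwc
              have hle : (c₀:ℕ) ≤ (c:ℕ) := hmin c hwc
              rw [hAblock r c hc6, if_neg, if_neg, mul_zero]
              · omega
              · intro h; exact hcc (Fin.ext (by omega))
            · rw [le_antisymm (not_lt.mp hwc) (hw0 c), zero_mul]
          · intro h; exact absurd (Finset.mem_univ c₀) h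
        rw [hsum, hAblock r c₀ hc₀6, if_pos hr6, mul_one]
      have hv1 : v r = 1 := real_int_eq_one (hint r)
        (by rw [hcalc]; exact hwc₀) (by rw [hcalc]; exact hwle1 c₀)
      exact hfin c₀ (hcalc.symm.trans hv1)
  · rintro v ⟨c, rfl⟩
    refine ⟨subset_convexHull ℝ _ ⟨c, rfl⟩, fun r => ?_⟩
    show ∃ n : ℤ, blockMatR d Δ eE eM r c = (n : ℝ)
    simp only [blockMatR]
    split_ifs
    exacts [⟨1, by norm_num⟩, ⟨0, by norm_num⟩, ⟨0, by norm_num⟩, ⟨1, by norm_num⟩,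
      ⟨Δ, rfl⟩, ⟨0, by norm_num⟩]
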